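/- Let n ≥ 1, let X be an n×n real matrix, and let C be the n×n matrix with C_{jj} = c_j and C_{ij} = 1 for i ≠ j, where c_j > 1 for all j. Suppose the diagonal entries of X are −1 and for all i ≠ j the condition (1/X_{ij})·(1 − Σ_{t ≠ i, t ≠ j} X_{it}) = c_j holds with X_{ij} ≠ 0. Then X·C is a diagonal matrix whose i-th diagonal entry equals −c_i + Σ_{j ≠ i} X_{ij}, and each of these diagonal entries is strictly negative (using Lemma 5.2); hence X is invertible. -/

import Mathlib

/-- Computation (5.16) in Lemma 5.3: with `-1` on the diagonal of `X`, off-diagonal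
entries satisfying condition (5.11), and `C` the matrix with `c j > 1` on the diagonal
and `1` elsewhere, the product `X * C` is diagonal with `i`-th entry
`-c i + ∑_{j ≠ i} X i j`, each such entry is negative, and `X` is invertible. -/
theorem stmt_5 (n : ℕ) (hn : 1 ≤ n) (c : Fin n → ℝ) (hc : ∀ j, 1 < c j)
    (X C : Matrix (Fin n) (Fin n) ℝ)
    (hXdiag : ∀ i, X i i = -1)
    (hXne : ∀ i j, i ≠ j → X i j ≠ 0)
    (hXcond : ∀ i j, i ≠ j →
      (1 / X i j) * (1 - ∑ t ∈ (Finset.univ.erase i).erase j, X i t) = c j)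
    (hC : ∀ i j, C i j = if i = j then c j else 1) :
    X * C = Matrix.diagonal (fun i => -c i + ∑ j ∈ Finset.univ.erase i, X i j) ∧
    (∀ i, -c i + ∑ j ∈ Finset.univ.erase i, X i j < 0) ∧
    IsUnit X.det := by
  have key : ∀ i j, j ≠ i →
      X i j * (c j - 1) = 1 - ∑ t ∈ Finset.univ.erase i, X i t := by
    intro i j hji
    have hij : i ≠ j := fun e => hji e.symm
    have h := hXcond i j hij
    have hne := hXne i j hij
    have hj : j ∈ Finset.univ.erase i := Finset.mem_erase.2 ⟨hji, Finset.mem_univ j⟩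
    have hT : ∑ t ∈ (Finset.univ.erase i).erase j, X i t
        = (∑ t ∈ Finset.univ.erase i, X i t) - X i j :=
      Finset.sum_erase_eq_sub hj
    have htot : ∑ t ∈ Finset.univ.erase i, X i t = ∑ t, X i t - X i i :=
      Finset.sum_erase_eq_sub (Finset.mem_univ i)
    rw [hT] at h
    field_simp at h
    rw [htot]
    linear_combination -h - htot
  have hXC : X * C =
      Matrix.diagonal (fun i => -c i + ∑ j ∈ Finset.univ.erase i, X i j) := by
    ext i k
    rw [Matrix.mul_apply]
    have hsplit : ∑ j, X i j * C j k
        = X i k * c k + ∑ j ∈ Finset.univ.erase k, X i j := by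
      rw [← Finset.add_sum_erase _ _ (Finset.mem_univ k), hC]
      simp only [if_pos rfl]
      congr 1
      apply Finset.sum_congr rfl
      intro j hj
      rw [hC, if_neg (Finset.mem_erase.1 hj).1, mul_one]
    rw [hsplit]
    by_cases h : i = k
    · subst h
      rw [Matrix.diagonal_apply_eq, hXdiag]
      ring
    · rw [Matrix.diagonal_apply_ne _ h]
      have hk := key i k (fun e => h e.symm)
      have hsum : ∑ j ∈ Finset.univ.erase k, X i j
          = (-1 + ∑ j ∈ Finset.univ.erase i, X i j) - X i k := by
        rw [Finset.sum_erase_eq_sub (Finset.mem_univ k),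
            ← Finset.add_sum_erase _ _ (Finset.mem_univ i), hXdiag]
      rw [hsum]
      linear_combination hk
  have hneg : ∀ i, -c i + ∑ j ∈ Finset.univ.erase i, X i j < 0 := by
    intro i
    set S := ∑ j ∈ Finset.univ.erase i, X i j with hSdef
    set K := ∑ j ∈ Finset.univ.erase i, 1 / (c j - 1) with hKdef
    have hK : 0 ≤ K := Finset.sum_nonneg fun j _ => by
      have h1 : (0:ℝ) < c j - 1 := by linarith [hc j]
      positivity
    have hSK : S = (1 - S) * K := by
      rw [hKdef, Finset.mul_sum, hSdef]
      apply Finset.sum_congr rfl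
      intro j hj
      have hji : j ≠ i := (Finset.mem_erase.1 hj).1
      have hc1 : c j - 1 ≠ 0 := by have := hc j; linarith
      have hkey := key i j hji
      rw [mul_one_div, eq_div_iff hc1]
      linear_combination hkey
    have hS1 : S < 1 := by nlinarith
    have := hc i
    linarith
  refine ⟨hXC, hneg, ?_⟩
  have hdet : (X * C).det = ∏ i, (-c i + ∑ j ∈ Finset.univ.erase i, X i j) := by
    rw [hXC, Matrix.det_diagonal]
  have hne0 : (X * C).det ≠ 0 := by
    rw [hdet]
    exact Finset.prod_ne_zero_iff.2 fun i _ => ne_of_lt (hneg i)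
  rw [Matrix.det_mul] at hne0
  exact isUnit_iff_ne_zero.2 (left_ne_zero_of_mul hne0)
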